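/- Let n ≥ 1 and let x_1, …, x_n ∈ (0,∞). Let 𝒦 denote the set of all functions h : [0,∞) → ℝ that are convex on [0,∞) and Lebesgue integrable over [0,∞). Define the least squares criterion Φ(h) := ∫_0^∞ h(x)² dx − (2/n)·∑_{i=1}^n h(x_i). Suppose f̂ ∈ 𝒦 is square-integrable over [0,∞) and satisfies Φ(f̂) ≤ Φ(h) for every square-integrable h ∈ 𝒦. Let Δ : [0,∞) → ℝ be square-integrable over [0,∞) and suppose there exists t > 0 such that f̂ + t·Δ ∈ 𝒦. Then (1/n)·∑_{i=1}^n Δ(x_i) ≤ ∫_0^∞ Δ(x)·f̂(x) dx. -/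

import Mathlib

open MeasureTheory Set

/-- Proposition 2, least squares case: first-order characterization of the
least squares estimator of a convex density on `[0,∞)`. -/
theorem lse_directional_derivative
    (n : ℕ) (hn : 1 ≤ n) (x : Fin n → ℝ) (hx : ∀ i, 0 < x i)
    (fhat : ℝ → ℝ)
    (hfconv : ConvexOn ℝ (Ici 0) fhat) (hfint : IntegrableOn fhat (Ici 0))
    (hfsq : IntegrableOn (fun y => fhat y ^ 2) (Ici 0))
    (hopt : ∀ h : ℝ → ℝ, ConvexOn ℝ (Ici 0) h → IntegrableOn h (Ici 0) →
      IntegrableOn (fun y => h y ^ 2) (Ici 0) →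
      (∫ y in Ici (0 : ℝ), fhat y ^ 2) - (2 / n) * ∑ i, fhat (x i) ≤
        (∫ y in Ici (0 : ℝ), h y ^ 2) - (2 / n) * ∑ i, h (x i))
    (Δ : ℝ → ℝ) (hΔsq : IntegrableOn (fun y => Δ y ^ 2) (Ici 0))
    (hdir : ∃ t : ℝ, 0 < t ∧ ConvexOn ℝ (Ici 0) (fun y => fhat y + t * Δ y) ∧
      IntegrableOn (fun y => fhat y + t * Δ y) (Ici 0)) :
    (n : ℝ)⁻¹ * ∑ i, Δ (x i) ≤ ∫ y in Ici (0 : ℝ), Δ y * fhat y := by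
  obtain ⟨t, ht, hconvt, hintt⟩ := hdir
  -- Δ is integrable
  have h1 : IntegrableOn (fun y => t * Δ y) (Ici 0) := by
    have e : (fun y => t * Δ y) = (fun y => (fhat y + t * Δ y) - fhat y) := by
      funext y; ring
    rw [e]; exact hintt.sub hfint
  have hΔint : IntegrableOn Δ (Ici 0) := by
    have e : Δ = fun y => t⁻¹ * (t * Δ y) := by
      funext y; rw [inv_mul_cancel_left₀ ht.ne']
    rw [e]; exact h1.const_mul _
  have hΔm : AEStronglyMeasurable Δ (volume.restrict (Ici 0)) := hΔint.1
  have hfm : AEStronglyMeasurable fhat (volume.restrict (Ici 0)) := hfint.1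
  -- Δ * fhat is integrable
  have hΔf : IntegrableOn (fun y => Δ y * fhat y) (Ici 0) := by
    refine Integrable.mono' (((hΔsq.add hfsq).const_mul (1/2 : ℝ))) (hΔm.mul hfm) ?_
    filter_upwards with y
    simp only [Real.norm_eq_abs, abs_mul, Pi.add_apply]
    nlinarith [abs_nonneg (Δ y), abs_nonneg (fhat y), sq_abs (Δ y), sq_abs (fhat y),
      sq_nonneg (|Δ y| - |fhat y|)]
  set C := ∫ y in Ici (0 : ℝ), Δ y ^ 2 with hC
  set I := ∫ y in Ici (0 : ℝ), Δ y * fhat y with hI0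
  have hC0 : 0 ≤ C := integral_nonneg (fun y => sq_nonneg _)
  have key : ∀ s : ℝ, 0 < s → s ≤ t →
      (n : ℝ)⁻¹ * ∑ i, Δ (x i) ≤ I + s / 2 * C := by
    intro s hs hst
    have hst' : s / t ≤ 1 := (div_le_one ht).mpr hst
    have hst0 : 0 ≤ s / t := div_nonneg hs.le ht.le
    have heq : (fun y => fhat y + s * Δ y) =
        (fun y => (1 - s / t) • fhat y + (s / t) • (fhat y + t * Δ y)) := by
      funext y; simp only [smul_eq_mul]; have h' : s / t * t = s := div_mul_cancel₀ s ht.ne'; linear_combination (-(Δ y)) * h'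
    have hconv : ConvexOn ℝ (Ici 0) (fun y => fhat y + s * Δ y) := by
      rw [heq]
      exact (hfconv.smul (by linarith)).add (hconvt.smul hst0)
    have hint : IntegrableOn (fun y => fhat y + s * Δ y) (Ici 0) :=
      hfint.add (hΔint.const_mul s)
    have ia : IntegrableOn (fun y => fhat y ^ 2 + 2 * s * (Δ y * fhat y)) (Ici 0) :=
      hfsq.add (hΔf.const_mul _)
    have ib : IntegrableOn (fun y => s ^ 2 * Δ y ^ 2) (Ici 0) := hΔsq.const_mul _
    have hsq : IntegrableOn (fun y => (fhat y + s * Δ y) ^ 2) (Ici 0) := by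
      have e : (fun y => (fhat y + s * Δ y) ^ 2) =
          (fun y => fhat y ^ 2 + 2 * s * (Δ y * fhat y) + s ^ 2 * Δ y ^ 2) := by
        funext y; ring
      rw [e]; exact ia.add ib
    have h := hopt _ hconv hint hsq
    have hI : (∫ y in Ici (0 : ℝ), (fhat y + s * Δ y) ^ 2) =
        (∫ y in Ici (0 : ℝ), fhat y ^ 2) + 2 * s * I + s ^ 2 * C := by
      have e : (fun y => (fhat y + s * Δ y) ^ 2) =
          (fun y => (fhat y ^ 2 + 2 * s * (Δ y * fhat y)) + s ^ 2 * Δ y ^ 2) := by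
        funext y; ring
      rw [show (∫ y in Ici (0 : ℝ), (fhat y + s * Δ y) ^ 2) =
          ∫ y in Ici (0 : ℝ), (fhat y ^ 2 + 2 * s * (Δ y * fhat y)) + s ^ 2 * Δ y ^ 2
        from by rw [e], integral_add ia ib, integral_add hfsq (hΔf.const_mul _),
        integral_const_mul, integral_const_mul]
    have hS : ∑ i, (fhat (x i) + s * Δ (x i)) = ∑ i, fhat (x i) + s * ∑ i, Δ (x i) := by
      rw [Finset.sum_add_distrib, Finset.mul_sum]
    rw [hI, hS, mul_add] at h
    have hn0 : (0 : ℝ) < n := by exact_mod_cast hn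
    have h3 : (2 / n) * (s * ∑ i, Δ (x i)) ≤ 2 * s * I + s ^ 2 * C := by linarith
    have h4 : s * ((n : ℝ)⁻¹ * ∑ i, Δ (x i)) ≤ s * (I + s / 2 * C) := by
      have e2 : (2 / (n : ℝ)) * (s * ∑ i, Δ (x i)) =
          2 * (s * ((n : ℝ)⁻¹ * ∑ i, Δ (x i))) := by
        field_simp
      rw [e2] at h3
      nlinarith [h3]
    exact le_of_mul_le_mul_left h4 hs
  refine le_of_forall_pos_le_add ?_
  intro ε hε
  set s := min t (ε / (C + 1)) with hsdef
  have hs0 : 0 < s := lt_min ht (div_pos hε (by linarith))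
  have h := key s hs0 (min_le_left _ _)
  have hsC : s / 2 * C ≤ ε := by
    have h1 : s ≤ ε / (C + 1) := min_le_right _ _
    have h2 : s * (C + 1) ≤ ε := by
      rw [← le_div_iff₀ (by linarith : (0:ℝ) < C + 1)]; exact h1
    nlinarith
  linarith
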